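/- Let p_1 < p_2 < ... denote the primes in increasing order. Then the partial products ∏_{i=1}^{k} (1 - 1/p_i) tend to 0 as k → ∞. -/

import Mathlib

open Finset Filter

/-- `nthPrime k` is the `k`-th prime, indexed from 1 (`nthPrime 1 = 2`, ...). -/
noncomputable def nthPrime (k : ℕ) : ℕ := Nat.nth Nat.Prime (k - 1)

lemma nthPrime_prime (k : ℕ) : (nthPrime k).Prime :=
  Nat.nth_mem_of_infinite Nat.infinite_setOf_prime _

lemma not_summable_nth : ¬ Summable (fun n : ℕ ↦ (1 / (Nat.nth Nat.Prime n : ℕ) : ℝ)) := by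
  intro h
  apply Nat.Primes.not_summable_one_div
  have : (fun p : Nat.Primes ↦ (1 / p : ℝ)) =
      (fun n : ℕ ↦ (1 / (Nat.nth Nat.Prime n : ℕ) : ℝ)) ∘ (fun p : Nat.Primes ↦ Nat.count Nat.Prime p) := by
    funext p
    simp [Function.comp, Nat.nth_count p.prop]
  rw [this]
  refine h.comp_injective ?_
  intro p q hpq
  have := congrArg (Nat.nth Nat.Prime) hpq
  rw [Nat.nth_count p.prop, Nat.nth_count q.prop] at this
  exact Subtype.ext this

lemma sum_tendsto : Tendsto (fun k : ℕ ↦ ∑ i ∈ Finset.Icc 1 k, (1 / (nthPrime i : ℝ))) atTop atTop := by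
  have h := (not_summable_iff_tendsto_nat_atTop_of_nonneg
      (f := fun n : ℕ ↦ (1 / (Nat.nth Nat.Prime n : ℕ) : ℝ)) (fun n ↦ by positivity)).mp
      not_summable_nth
  have heq : ∀ k : ℕ, ∑ i ∈ Finset.Icc 1 k, (1 / (nthPrime i : ℝ)) =
      ∑ i ∈ Finset.range k, (1 / (Nat.nth Nat.Prime i : ℕ) : ℝ) := by
    intro k
    rw [← Finset.Ico_add_one_right_eq_Icc, Finset.sum_Ico_eq_sum_range]
    simp [nthPrime]
  simpa only [heq] using h

/-- The partial products `∏_{i=1}^{k} (1 - 1/p_i)` tend to `0` as `k → ∞`. -/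
theorem prod_one_sub_inv_primes_tendsto_zero :
    Tendsto (fun k : ℕ => ∏ i ∈ Finset.Icc 1 k, (1 - 1 / (nthPrime i : ℝ))) atTop (nhds 0) := by
  have hp2 : ∀ i : ℕ, (2 : ℝ) ≤ (nthPrime i : ℝ) := fun i ↦ by
    exact_mod_cast (nthPrime_prime i).two_le
  have hnn : ∀ i : ℕ, (0 : ℝ) ≤ 1 - 1 / (nthPrime i : ℝ) := by
    intro i
    have h2 := hp2 i
    have : 1 / (nthPrime i : ℝ) ≤ 1 / 2 := by
      apply one_div_le_one_div_of_le <;> linarith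
    linarith
  have hub : ∀ k : ℕ, ∏ i ∈ Finset.Icc 1 k, (1 - 1 / (nthPrime i : ℝ)) ≤
      Real.exp (-(∑ i ∈ Finset.Icc 1 k, (1 / (nthPrime i : ℝ)))) := by
    intro k
    rw [← Finset.sum_neg_distrib, Real.exp_sum]
    refine Finset.prod_le_prod (fun i _ ↦ hnn i) (fun i _ ↦ ?_)
    have := Real.add_one_le_exp (-(1 / (nthPrime i : ℝ)))
    linarith
  have hexp : Tendsto (fun k : ℕ ↦ Real.exp (-(∑ i ∈ Finset.Icc 1 k, (1 / (nthPrime i : ℝ)))))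
      atTop (nhds 0) :=
    Real.tendsto_exp_atBot.comp (tendsto_neg_atTop_atBot.comp sum_tendsto)
  refine tendsto_of_tendsto_of_tendsto_of_le_of_le tendsto_const_nhds hexp
    (fun k ↦ Finset.prod_nonneg fun i _ ↦ hnn i) hub
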